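/- Let p ∈ (1/2, 1), η > 0, w* = (ln p − ln(1−p))/(2η) > 0, and φ(w) = exp(−w²)·(p·exp(−wη) − (1−p)·exp(wη)). Then for every h ∈ (0, w*]: ∫_{−h}^{0} φ(w* + w) dw > ∫_{0}^{h} (−φ(w* + w)) dw. Equivalently, ∫_{w*−h}^{w*} φ > −∫_{w*}^{w*+h} φ. -/

import Mathlib

/-- Integral inequality for `φ(w) = exp(−w²)·(p·e^{−wη} − (1−p)·e^{wη})` about its zero
`w* = (ln p − ln(1−p))/(2η) > 0`: for `0 < h ≤ w*`,
`∫_{−h}^{0} φ(w*+w) dw > ∫_{0}^{h} (−φ(w*+w)) dw`. -/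
theorem sam_integral_inequality (p η : ℝ) (hp : p ∈ Set.Ioo (1/2 : ℝ) 1) (hη : 0 < η) :
    ∀ h : ℝ, h ∈ Set.Ioc (0 : ℝ) ((Real.log p - Real.log (1 - p)) / (2 * η)) →
      (∫ w in (-h)..(0 : ℝ),
          Real.exp (-((Real.log p - Real.log (1 - p)) / (2 * η) + w) ^ 2) *
            (p * Real.exp (-((Real.log p - Real.log (1 - p)) / (2 * η) + w) * η) -
              (1 - p) * Real.exp (((Real.log p - Real.log (1 - p)) / (2 * η) + w) * η))) >
      (∫ w in (0 : ℝ)..h,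
          -(Real.exp (-((Real.log p - Real.log (1 - p)) / (2 * η) + w) ^ 2) *
            (p * Real.exp (-((Real.log p - Real.log (1 - p)) / (2 * η) + w) * η) -
              (1 - p) * Real.exp (((Real.log p - Real.log (1 - p)) / (2 * η) + w) * η)))) := by
  obtain ⟨hp1, hp2⟩ := hp
  intro h hh
  obtain ⟨hh0, hhW⟩ := hh
  set W : ℝ := (Real.log p - Real.log (1 - p)) / (2 * η) with hWdef
  have hp0 : 0 < p := by linarith
  have hq0 : 0 < 1 - p := by linarith
  have hlog : Real.log (1 - p) < Real.log p := Real.log_lt_log hq0 (by linarith)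
  have hW0 : 0 < W := div_pos (by linarith) (by linarith)
  set φ : ℝ → ℝ := fun w => Real.exp (-w ^ 2) *
      (p * Real.exp (-w * η) - (1 - p) * Real.exp (w * η)) with hφdef
  have hφcont : Continuous φ := by fun_prop
  -- key algebraic identity: p e^{-Wη} = (1-p) e^{Wη}
  have hWη : W * η = (Real.log p - Real.log (1 - p)) / 2 := by
    rw [hWdef, div_mul_eq_mul_div, div_eq_div_iff (by positivity) (by norm_num)]; ring
  have hc : (1 - p) * Real.exp (W * η) = p * Real.exp (-(W * η)) := by
    have h1 : (1 - p) * Real.exp (W * η) = Real.exp (Real.log (1 - p) + W * η) := by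
      rw [Real.exp_add, Real.exp_log hq0]
    have h2 : p * Real.exp (-(W * η)) = Real.exp (Real.log p - W * η) := by
      rw [Real.exp_sub, Real.exp_log hp0, div_eq_mul_inv, Real.exp_neg]
    rw [h1, h2]
    congr 1
    rw [hWη]; ring
  set c : ℝ := p * Real.exp (-(W * η)) with hcdef
  have hc0 : 0 < c := mul_pos hp0 (Real.exp_pos _)
  have key : ∀ x : ℝ, φ (W + x) =
      Real.exp (-(W + x) ^ 2) * (c * (Real.exp (-(x * η)) - Real.exp (x * η))) := by
    intro x
    have e1 : p * Real.exp (-(W + x) * η) = c * Real.exp (-(x * η)) := by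
      rw [hcdef, mul_assoc, ← Real.exp_add]; ring_nf
    have e2 : (1 - p) * Real.exp ((W + x) * η) = c * Real.exp (x * η) := by
      rw [← hc, mul_assoc, ← Real.exp_add]; ring_nf
    simp only [hφdef]
    rw [e1, e2]; ring
  -- transform LHS via reflection
  have lhs_eq : (∫ w in (-h)..(0 : ℝ), φ (W + w)) = ∫ w in (0 : ℝ)..h, φ (W + -w) := by
    rw [intervalIntegral.integral_comp_neg (fun w => φ (W + w))]
    simp
  -- pointwise positivity of the sum
  have hpos : ∀ x ∈ Set.Ioo (0 : ℝ) h, 0 < φ (W + -x) + φ (W + x) := by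
    intro x hx
    obtain ⟨hx0, _⟩ := hx
    rw [key, key]
    have hsq : (W + -x) ^ 2 < (W + x) ^ 2 := by nlinarith
    have hexp : Real.exp (-(W + x) ^ 2) < Real.exp (-(W + -x) ^ 2) :=
      Real.exp_lt_exp.mpr (by linarith)
    have hsinh : Real.exp (-(x * η)) < Real.exp (x * η) :=
      Real.exp_lt_exp.mpr (by nlinarith)
    have hx1 : -(-x * η) = x * η := by ring
    have hx2 : -x * η = -(x * η) := by ring
    rw [hx1, hx2]
    have hs : 0 < Real.exp (x * η) - Real.exp (-(x * η)) := by linarith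
    have hprod := mul_pos (mul_pos hc0 hs)
      (sub_pos.mpr hexp)
    nlinarith [hprod]
  have hint1 : IntervalIntegrable (fun w => φ (W + -w)) MeasureTheory.volume 0 h :=
    (hφcont.comp (by continuity)).intervalIntegrable 0 h
  have hint2 : IntervalIntegrable (fun w => -(φ (W + w))) MeasureTheory.volume 0 h :=
    ((hφcont.comp (by continuity)).neg).intervalIntegrable 0 h
  have hmain : 0 < ∫ w in (0 : ℝ)..h, (φ (W + -w) - -(φ (W + w))) := by
    apply intervalIntegral.intervalIntegral_pos_of_pos_on
    · exact hint1.sub hint2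
    · intro x hx
      have := hpos x hx
      simpa [sub_neg_eq_add] using this
    · exact hh0
  rw [intervalIntegral.integral_sub hint1 hint2] at hmain
  show (∫ w in (-h)..(0 : ℝ), φ (W + w)) > ∫ w in (0 : ℝ)..h, -(φ (W + w))
  rw [lhs_eq]
  linarith
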